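/- Let A(t) : D ⊂ X → X be closed with common dense domain and bounded inverses. Assume (i) (s,t) ↦ (1/(t−s))·C(t,s)x is bounded and uniformly continuous on {s ≠ t} ⊂ [0,1]² for all x ∈ X, where C(t,s) := A(t)A(s)⁻¹ − 1, and (ii) C(t)x := lim_{k→∞} k·C(t, t−1/k)x exists uniformly in t ∈ (0,1] for all x ∈ X. Then for every x ∈ D the map t ↦ A(t)x is continuously differentiable on [0,1] with derivative C(t)A(t)x. -/

import Mathlib

open Filter Topology Set

lemma aux_tendsto_of_ucOn {α Y : Type*} [UniformSpace α] [UniformSpace Y] [CompleteSpace Y]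
    {S : Set α} {f : α → Y} (hf : UniformContinuousOn f S) {q : α} (hq : q ∈ closure S) :
    ∃ L, Filter.Tendsto f (𝓝[S] q) (𝓝 L) := by
  have hne : (𝓝[S] q).NeBot := mem_closure_iff_nhdsWithin_neBot.mp hq
  have hmap : Filter.map (Subtype.val : S → α) (Filter.comap Subtype.val (𝓝 q)) = 𝓝[S] q := by
    rw [Filter.map_comap, Subtype.range_coe]; rfl
  have hnec : (Filter.comap (Subtype.val : S → α) (𝓝 q)).NeBot := by
    apply Filter.NeBot.of_map (m := Subtype.val)
    rw [hmap]; exact hne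
  have hcau : Cauchy (Filter.comap (Subtype.val : S → α) (𝓝 q)) :=
    Cauchy.comap cauchy_nhds (by rw [uniformity_setCoe]; exact le_rfl)
  have hucr : UniformContinuous (S.restrict f) := uniformContinuousOn_iff_restrict.mp hf
  have hcau2 : Cauchy (Filter.map f (𝓝[S] q)) := by
    rw [← hmap, Filter.map_map]
    exact hcau.map hucr
  exact CompleteSpace.complete hcau2

lemma aux_cont_ext {Y : Type*} [NormedAddCommGroup Y]
    {S : Set (ℝ × ℝ)} {f : ℝ × ℝ → Y} (hf : UniformContinuousOn f S)
    {g : ℝ → Y} {T : Set ℝ}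
    (hne : ∀ τ ∈ T, (𝓝[S] ((τ, τ) : ℝ × ℝ)).NeBot)
    (hg : ∀ τ ∈ T, Filter.Tendsto f (𝓝[S] ((τ, τ) : ℝ × ℝ)) (𝓝 (g τ)))
    {t0 : ℝ} (ht0 : t0 ∈ T) :
    Filter.Tendsto g (𝓝[T] t0) (𝓝 (g t0)) := by
  rw [Metric.tendsto_nhdsWithin_nhds]
  intro ε hε
  obtain ⟨δ, hδ, hδ'⟩ := Metric.uniformContinuousOn_iff.mp hf (ε/3) (by linarith)
  refine ⟨δ/3, by linarith, fun τ hτ hd => ?_⟩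
  have hexists : ∀ σ ∈ T, ∃ p, p ∈ S ∧ dist p ((σ, σ) : ℝ × ℝ) < δ/3 ∧ dist (f p) (g σ) < ε/3 := by
    intro σ hσ
    haveI := hne σ hσ
    have h1 : ∀ᶠ p in 𝓝[S] ((σ, σ) : ℝ × ℝ), p ∈ S := self_mem_nhdsWithin
    have h2 : ∀ᶠ p in 𝓝[S] ((σ, σ) : ℝ × ℝ), dist p ((σ, σ) : ℝ × ℝ) < δ/3 := by
      apply Filter.Eventually.filter_mono nhdsWithin_le_nhds
      have : Metric.ball ((σ, σ) : ℝ × ℝ) (δ/3) ∈ 𝓝 ((σ, σ) : ℝ × ℝ) :=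
        Metric.ball_mem_nhds _ (by linarith)
      filter_upwards [this] with p hp using hp
    have h3 : ∀ᶠ p in 𝓝[S] ((σ, σ) : ℝ × ℝ), dist (f p) (g σ) < ε/3 :=
      (hg σ hσ) (Metric.ball_mem_nhds _ (by linarith))
    exact ((h1.and h2).and h3).exists.imp (fun p hp => ⟨hp.1.1, hp.1.2, hp.2⟩)
  obtain ⟨p, hpS, hp1, hp2⟩ := hexists τ hτ
  obtain ⟨q, hqS, hq1, hq2⟩ := hexists t0 ht0
  have hpq : dist p q < δ := by
    have h1 : dist ((τ, τ) : ℝ × ℝ) ((t0, t0) : ℝ × ℝ) = dist τ t0 := by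
      simp [Prod.dist_eq]
    calc dist p q ≤ dist p ((τ, τ) : ℝ × ℝ) + dist ((τ, τ) : ℝ × ℝ) ((t0, t0) : ℝ × ℝ)
        + dist ((t0, t0) : ℝ × ℝ) q := dist_triangle4 _ _ _ _
      _ < δ/3 + δ/3 + δ/3 := by
          rw [h1, dist_comm ((t0, t0) : ℝ × ℝ) q]
          refine add_lt_add (add_lt_add hp1 hd) hq1
      _ = δ := by ring
  calc dist (g τ) (g t0) ≤ dist (g τ) (f p) + dist (f p) (f q) + dist (f q) (g t0) :=
      dist_triangle4 _ _ _ _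
    _ < ε/3 + ε/3 + ε/3 := by
        refine add_lt_add (add_lt_add ?_ (hδ' p hpS q hqS hpq)) hq2
        rw [dist_comm]; exact hp2
    _ = ε := by ring


lemma aux_mem_closure {τ : ℝ} (hτ : τ ∈ Set.Icc (0:ℝ) 1) :
    ((τ, τ) : ℝ × ℝ) ∈
      closure {p : ℝ × ℝ | p ∈ Set.Icc (0:ℝ) 1 ×ˢ Set.Icc (0:ℝ) 1 ∧ p.1 ≠ p.2} := by
  obtain ⟨h0, h1⟩ := hτ
  rcases eq_or_lt_of_le h0 with h | h
  · -- τ = 0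
    subst h
    have hinv : Tendsto (fun n : ℕ => ((n : ℝ) + 1)⁻¹) atTop (𝓝 0) := by
      simpa [one_div] using tendsto_one_div_add_atTop_nhds_zero_nat (𝕜 := ℝ)
    have htt : Tendsto (fun n : ℕ => (((0 : ℝ), ((n : ℝ) + 1)⁻¹) : ℝ × ℝ)) atTop
        (𝓝 ((0, 0) : ℝ × ℝ)) := tendsto_const_nhds.prodMk_nhds hinv
    refine mem_closure_of_tendsto htt (Eventually.of_forall fun n => ?_)
    have hpos : (0:ℝ) < ((n : ℝ) + 1)⁻¹ := by positivity
    have hle : ((n : ℝ) + 1)⁻¹ ≤ 1 := by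
      rw [inv_le_one_iff₀]; right; linarith [Nat.cast_nonneg (α := ℝ) n]
    exact ⟨⟨⟨le_refl 0, zero_le_one⟩, ⟨le_of_lt hpos, hle⟩⟩, by simpa using hpos.ne⟩
  · -- 0 < τ
    have hinv : Tendsto (fun n : ℕ => τ / ((n : ℝ) + 1)) atTop (𝓝 0) := by
      simpa [div_eq_mul_inv] using
        (tendsto_const_nhds (x := τ)).mul
          (by simpa [one_div] using tendsto_one_div_add_atTop_nhds_zero_nat (𝕜 := ℝ) :
            Tendsto (fun n : ℕ => ((n : ℝ) + 1)⁻¹) atTop (𝓝 0))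
    have htt : Tendsto (fun n : ℕ => ((τ - τ / ((n : ℝ) + 1), τ) : ℝ × ℝ)) atTop
        (𝓝 ((τ, τ) : ℝ × ℝ)) := by
      have : Tendsto (fun n : ℕ => τ - τ / ((n : ℝ) + 1)) atTop (𝓝 τ) := by
        simpa using tendsto_const_nhds.sub hinv
      exact this.prodMk_nhds tendsto_const_nhds
    refine mem_closure_of_tendsto htt (Eventually.of_forall fun n => ?_)
    have hn1 : (0:ℝ) < (n : ℝ) + 1 := by positivity
    have hpos : (0:ℝ) < τ / ((n : ℝ) + 1) := by positivity
    have hle : τ / ((n : ℝ) + 1) ≤ τ := by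
      rw [div_le_iff₀ hn1]; nlinarith
    refine ⟨⟨⟨by linarith, by linarith⟩, ⟨le_of_lt h, h1⟩⟩, (sub_lt_self τ hpos).ne⟩

set_option maxHeartbeats 1000000 in
/-- Main theorem (Yosida ⇒ C¹): if (i) `(s,t) ↦ (t-s)⁻¹ • C(t,s)x` is bounded and
uniformly continuous on the off-diagonal of `[0,1]²` for every `x`, and (ii)
`C(t)x = lim_k k • C(t, t-1/k)x` exists uniformly in `t ∈ (0,1]`, then for every `y ∈ D`
the map `t ↦ A t y` is continuously differentiable on `[0,1]`, with derivative
`C(t)(A t y)` on `(0,1]`. Here `C(t,s)x = A t (A s)⁻¹ x - x`. -/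
theorem stmt14
    {X : Type*} [NormedAddCommGroup X] [NormedSpace ℝ X] [CompleteSpace X]
    (D : Submodule ℝ X) (hD : Dense (D : Set X))
    (A : ℝ → D →ₗ[ℝ] X)
    (hclosed : ∀ t, IsClosed {p : X × X | ∃ h : p.1 ∈ D, A t ⟨p.1, h⟩ = p.2})
    (R : ℝ → X →L[ℝ] X) (hmem : ∀ s x, R s x ∈ D)
    (hR1 : ∀ s x, A s ⟨R s x, hmem s x⟩ = x)
    (hR2 : ∀ s (y : D), R s (A s y) = y)
    (Cop : ℝ → X → X)
    (hbdd : ∀ x : X, ∃ M : ℝ, ∀ s ∈ Set.Icc (0:ℝ) 1, ∀ t ∈ Set.Icc (0:ℝ) 1, s ≠ t →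
      ‖(t - s)⁻¹ • (A t ⟨R s x, hmem s x⟩ - x)‖ ≤ M)
    (hunif : ∀ x : X, UniformContinuousOn
      (fun p : ℝ × ℝ => (p.2 - p.1)⁻¹ • (A p.2 ⟨R p.1 x, hmem p.1 x⟩ - x))
      {p : ℝ × ℝ | p ∈ Set.Icc (0:ℝ) 1 ×ˢ Set.Icc (0:ℝ) 1 ∧ p.1 ≠ p.2})
    (hconv : ∀ x : X, ∀ ε > (0:ℝ), ∃ K : ℕ, ∀ k ≥ K, ∀ t ∈ Set.Icc ((k:ℝ)⁻¹) 1,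
      ‖(k:ℝ) • (A t ⟨R (t - (k:ℝ)⁻¹) x, hmem (t - (k:ℝ)⁻¹) x⟩ - x) - Cop t x‖ ≤ ε) :
    ∀ y : D, ∃ g : ℝ → X,
      (∀ t ∈ Set.Icc (0:ℝ) 1, HasDerivWithinAt (fun t => A t y) (g t) (Set.Icc 0 1) t) ∧
      ContinuousOn g (Set.Icc (0:ℝ) 1) ∧
      (∀ t ∈ Set.Ioc (0:ℝ) 1, g t = Cop t (A t y)) := by
  classical
  intro y
  set S : Set (ℝ × ℝ) := {p : ℝ × ℝ | p ∈ Set.Icc (0:ℝ) 1 ×ˢ Set.Icc (0:ℝ) 1 ∧ p.1 ≠ p.2}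
    with hSdef
  -- the operators are continuous by the closed graph theorem
  have hTcont : ∀ p : ℝ × ℝ,
      Continuous fun x : X =>
        ((A p.2).comp (LinearMap.codRestrict D ((R p.1 : X →ₗ[ℝ] X)) (hmem p.1))) x := by
    intro p
    set L : X →ₗ[ℝ] X :=
      (A p.2).comp (LinearMap.codRestrict D ((R p.1 : X →ₗ[ℝ] X)) (hmem p.1)) with hL
    apply L.continuous_of_isClosed_graph
    have hpre : (L.graph : Set (X × X)) =
        (fun q : X × X => ((R p.1 q.1, q.2) : X × X)) ⁻¹'
          {q : X × X | ∃ h : q.1 ∈ D, A p.2 ⟨q.1, h⟩ = q.2} := by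
      ext q
      simp only [Set.mem_preimage, Set.mem_setOf_eq, LinearMap.mem_graph_iff, hL,
        LinearMap.comp_apply, LinearMap.codRestrict_apply]
      constructor
      · intro h; exact ⟨hmem p.1 q.1, h.symm⟩
      · rintro ⟨h, hh⟩; exact hh.symm
    rw [hpre]
    exact (hclosed p.2).preimage (((R p.1).continuous.comp continuous_fst).prodMk continuous_snd)
  set B : ℝ × ℝ → X →L[ℝ] X := fun p =>
    (p.2 - p.1)⁻¹ •
      (⟨(A p.2).comp (LinearMap.codRestrict D ((R p.1 : X →ₗ[ℝ] X)) (hmem p.1)), hTcont p⟩ - 1)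
    with hBdef
  have hB : ∀ (p : ℝ × ℝ) (x : X),
      B p x = (p.2 - p.1)⁻¹ • (A p.2 ⟨R p.1 x, hmem p.1 x⟩ - x) := fun p x => rfl
  -- uniform continuity in the operator form
  have huc : ∀ x : X, UniformContinuousOn (fun p : ℝ × ℝ => B p x) S := by
    intro x
    have := hunif x
    simpa only [← hB] using this
  -- uniform bound by Banach-Steinhaus
  obtain ⟨M0, hM0⟩ : ∃ C', ∀ i : S, ‖B (i : ℝ × ℝ)‖ ≤ C' := by
    apply banach_steinhaus
    intro x
    obtain ⟨M, hM⟩ := hbdd x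
    refine ⟨M, fun i => ?_⟩
    obtain ⟨⟨hs, ht⟩, hne⟩ := i.2
    rw [hB]
    exact hM i.1.1 hs i.1.2 ht hne
  set M : ℝ := max M0 0 with hM
  have hMB : ∀ p ∈ S, ∀ x : X, ‖B p x‖ ≤ M * ‖x‖ := by
    intro p hp x
    calc ‖B p x‖ ≤ ‖B p‖ * ‖x‖ := (B p).le_opNorm x
      _ ≤ M * ‖x‖ := by
          apply mul_le_mul_of_nonneg_right _ (norm_nonneg x)
          exact le_trans (hM0 ⟨p, hp⟩) (le_max_left _ _)
  -- the limits along the diagonal exist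
  have hneB : ∀ τ ∈ Set.Icc (0:ℝ) 1, (𝓝[S] ((τ, τ) : ℝ × ℝ)).NeBot := fun τ hτ =>
    mem_closure_iff_nhdsWithin_neBot.mp (aux_mem_closure hτ)
  have key : ∀ x : X, ∀ τ : ℝ, τ ∈ Set.Icc (0:ℝ) 1 →
      ∃ L, Tendsto (fun p : ℝ × ℝ => B p x) (𝓝[S] ((τ, τ) : ℝ × ℝ)) (𝓝 L) := by
    intro x τ hτ
    exact aux_tendsto_of_ucOn (huc x) (aux_mem_closure hτ)
  choose! Ψ hΨ using key
  -- Part 1 : differentiability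
  have hderiv : ∀ t ∈ Set.Icc (0:ℝ) 1,
      HasDerivWithinAt (fun t => (A t y : X)) (Ψ ((A t y : X)) t) (Set.Icc 0 1) t := by
    intro t ht
    rw [hasDerivWithinAt_iff_tendsto_slope]
    have hj : Tendsto (fun u : ℝ => ((t, u) : ℝ × ℝ)) (𝓝[Set.Icc (0:ℝ) 1 \ {t}] t)
        (𝓝[S] ((t, t) : ℝ × ℝ)) := by
      rw [tendsto_nhdsWithin_iff]
      constructor
      · exact ((continuous_const.prodMk continuous_id).tendsto t).mono_left nhdsWithin_le_nhds
      · filter_upwards [self_mem_nhdsWithin] with u hu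
        exact ⟨⟨ht, hu.1⟩, fun h => hu.2 (Set.mem_singleton_iff.mpr h.symm)⟩
    have hcomp := (hΨ ((A t y : X)) t ht).comp hj
    refine hcomp.congr' ?_
    filter_upwards [self_mem_nhdsWithin] with u hu
    have hy : (⟨R t (A t y), hmem t (A t y)⟩ : D) = y := Subtype.ext (hR2 t y)
    show B (t, u) (A t y) = slope (fun t => (A t y : X)) t u
    rw [hB, slope_def_module, hy]
  refine ⟨fun t => Ψ ((A t y : X)) t, hderiv, ?_, ?_⟩
  -- Part 2 : continuity of the derivative
  · intro t0 ht0
    have hA : Tendsto (fun t => Ψ ((A t0 y : X)) t) (𝓝[Set.Icc (0:ℝ) 1] t0)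
        (𝓝 (Ψ ((A t0 y : X)) t0)) :=
      aux_cont_ext (huc _) hneB (fun τ hτ => hΨ _ τ hτ) ht0
    have hfc : Tendsto (fun t => (A t y : X)) (𝓝[Set.Icc (0:ℝ) 1] t0) (𝓝 (A t0 y)) :=
      (hderiv t0 ht0).continuousWithinAt
    have hlip : ∀ᶠ t in 𝓝[Set.Icc (0:ℝ) 1] t0,
        ‖Ψ ((A t y : X)) t - Ψ ((A t0 y : X)) t‖ ≤ M * ‖(A t y : X) - (A t0 y : X)‖ := by
      filter_upwards [self_mem_nhdsWithin] with t ht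
      haveI := hneB t ht
      have h3 : Tendsto (fun p : ℝ × ℝ => B p ((A t y : X) - (A t0 y : X)))
          (𝓝[S] ((t, t) : ℝ × ℝ)) (𝓝 (Ψ ((A t y : X)) t - Ψ ((A t0 y : X)) t)) := by
        have h4 := (hΨ ((A t y : X)) t ht).sub (hΨ ((A t0 y : X)) t ht)
        exact h4.congr fun p => (map_sub (B p) _ _).symm
      refine le_of_tendsto h3.norm ?_
      filter_upwards [self_mem_nhdsWithin] with p hp
      exact hMB p hp _
    have h0 : Tendsto (fun t => Ψ ((A t y : X)) t - Ψ ((A t0 y : X)) t)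
        (𝓝[Set.Icc (0:ℝ) 1] t0) (𝓝 0) := by
      apply squeeze_zero_norm' hlip
      have h5 : Tendsto (fun t => M * ‖(A t y : X) - (A t0 y : X)‖) (𝓝[Set.Icc (0:ℝ) 1] t0)
          (𝓝 (M * ‖(A t0 y : X) - (A t0 y : X)‖)) :=
        tendsto_const_nhds.mul (hfc.sub tendsto_const_nhds).norm
      simpa using h5
    have hsum := hA.add h0
    rw [add_zero] at hsum
    show Filter.Tendsto (fun t => Ψ ((A t y : X)) t) (𝓝[Set.Icc (0:ℝ) 1] t0)
      (𝓝 (Ψ ((A t0 y : X)) t0))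
    exact hsum.congr fun t => by abel
  -- Part 3 : identification with Cop on (0,1]
  · intro t ht
    obtain ⟨ht0, ht1⟩ := ht
    set x : X := (A t y : X) with hx
    have htIcc : t ∈ Set.Icc (0:ℝ) 1 := ⟨le_of_lt ht0, ht1⟩
    obtain ⟨K1, hK1⟩ := exists_nat_gt t⁻¹
    have hinvlt : ∀ k : ℕ, K1 + 1 ≤ k → (0:ℝ) < (k:ℝ) ∧ ((k:ℝ))⁻¹ < t := by
      intro k hk
      have hk0 : 0 < k := lt_of_lt_of_le (Nat.succ_pos K1) hk
      have hkpos : (0:ℝ) < (k:ℝ) := by exact_mod_cast hk0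
      have htk : t⁻¹ < (k:ℝ) := by
        refine lt_of_lt_of_le hK1 ?_
        exact_mod_cast le_trans (Nat.le_succ K1) hk
      refine ⟨hkpos, ?_⟩
      rw [inv_lt_comm₀ hkpos ht0]
      exact htk
    have hevS : ∀ᶠ k : ℕ in atTop, ((t - ((k:ℝ))⁻¹, t) : ℝ × ℝ) ∈ S := by
      filter_upwards [eventually_ge_atTop (K1 + 1)] with k hk
      obtain ⟨hkpos, hkinv⟩ := hinvlt k hk
      have hkinvpos : (0:ℝ) < ((k:ℝ))⁻¹ := by positivity
      exact ⟨⟨⟨by linarith, by linarith⟩, ⟨le_of_lt ht0, ht1⟩⟩, (sub_lt_self t hkinvpos).ne⟩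
    have hq : Tendsto (fun k : ℕ => ((t - ((k:ℝ))⁻¹, t) : ℝ × ℝ)) atTop
        (𝓝[S] ((t, t) : ℝ × ℝ)) := by
      rw [tendsto_nhdsWithin_iff]
      refine ⟨?_, hevS⟩
      have h6 : Tendsto (fun k : ℕ => t - ((k:ℝ))⁻¹) atTop (𝓝 t) := by
        have h8 : Tendsto (fun k : ℕ => ((k:ℝ))⁻¹) atTop (𝓝 0) :=
          tendsto_inv_atTop_nhds_zero_nat (𝕜 := ℝ)
        simpa using tendsto_const_nhds.sub h8
      exact h6.prodMk_nhds tendsto_const_nhds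
    have hlim1 : Tendsto (fun k : ℕ => B ((t - ((k:ℝ))⁻¹, t)) x) atTop (𝓝 (Ψ x t)) :=
      (hΨ x t htIcc).comp hq
    have hlim2 : Tendsto (fun k : ℕ => B ((t - ((k:ℝ))⁻¹, t)) x) atTop (𝓝 (Cop t x)) := by
      rw [Metric.tendsto_atTop]
      intro ε hε
      obtain ⟨K, hK⟩ := hconv x (ε/2) (by linarith)
      refine ⟨max K (K1 + 1), fun k hk => ?_⟩
      have hk1 : K ≤ k := le_trans (le_max_left _ _) hk
      have hk2 : K1 + 1 ≤ k := le_trans (le_max_right _ _) hk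
      obtain ⟨hkpos, hkinv⟩ := hinvlt k hk2
      have h7 := hK k hk1 t ⟨le_of_lt hkinv, ht1⟩
      rw [dist_eq_norm]
      have hBe : B ((t - ((k:ℝ))⁻¹, t)) x
          = (k:ℝ) • (A t ⟨R (t - ((k:ℝ))⁻¹) x, hmem _ x⟩ - x) := by
        rw [hB]
        congr 1
        rw [sub_sub_cancel, inv_inv]
      rw [hBe]
      linarith
    exact tendsto_nhds_unique hlim1 hlim2
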